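/- If x is a quadratic irrational, then its continued fraction expansion is eventually periodic (Lagrange's theorem). -/

import Mathlib

/-- The sequence of complete quotients of the continued fraction algorithm. -/
noncomputable def cfX (x : ℝ) : ℕ → ℝ
  | 0 => x
  | n + 1 =>
    if cfX x n - ⌊cfX x n⌋ = 0 then 0 else 1 / (cfX x n - ⌊cfX x n⌋)

/-- The partial quotients (continued fraction expansion) of a real number. -/
noncomputable def cfA (x : ℝ) (n : ℕ) : ℤ := ⌊cfX x n⌋

lemma cfX_irrational {x : ℝ} (hx : Irrational x) : ∀ n, Irrational (cfX x n) := by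
  intro n
  induction n with
  | zero => exact hx
  | succ n ih =>
    have h1 : Irrational (cfX x n - (⌊cfX x n⌋ : ℤ)) := Irrational.sub_intCast ih _
    have h2 : cfX x n - ⌊cfX x n⌋ ≠ 0 := by
      intro h; exact h1.ne_rat 0 (by push_cast; exact h)
    have : cfX x (n+1) = (cfX x n - ⌊cfX x n⌋)⁻¹ := by
      simp only [cfX]; rw [if_neg h2, one_div]
    rw [this]
    exact h1.inv

lemma cfX_succ {x : ℝ} (hx : Irrational x) (n : ℕ) :
    cfX x (n+1) = 1 / (cfX x n - ⌊cfX x n⌋) := by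
  have h1 : Irrational (cfX x n - (⌊cfX x n⌋ : ℤ)) := Irrational.sub_intCast (cfX_irrational hx n) _
  have h2 : cfX x n - ⌊cfX x n⌋ ≠ 0 := by
    intro h; exact h1.ne_rat 0 (by push_cast; exact h)
  simp only [cfX]; rw [if_neg h2]

lemma cfX_one_lt {x : ℝ} (hx : Irrational x) (n : ℕ) : 1 < cfX x (n+1) := by
  rw [cfX_succ hx n]
  have h1 : Irrational (cfX x n - (⌊cfX x n⌋ : ℤ)) := Irrational.sub_intCast (cfX_irrational hx n) _
  have h2 : cfX x n - ⌊cfX x n⌋ ≠ 0 := by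
    intro h; exact h1.ne_rat 0 (by push_cast; exact h)
  have h3 : 0 ≤ cfX x n - ⌊cfX x n⌋ := by
    have := Int.fract_nonneg (cfX x n); rwa [Int.fract] at this
  have h4 : cfX x n - ⌊cfX x n⌋ < 1 := by
    have := Int.fract_lt_one (cfX x n); rwa [Int.fract] at this
  have h5 : 0 < cfX x n - ⌊cfX x n⌋ := lt_of_le_of_ne h3 (Ne.symm h2)
  rw [one_div]
  exact (one_lt_inv_iff₀.mpr ⟨h5, h4⟩)

lemma cfX_fract_pos {x : ℝ} (hx : Irrational x) (n : ℕ) :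
    0 < cfX x n - ⌊cfX x n⌋ ∧ cfX x n - ⌊cfX x n⌋ < 1 := by
  have h1 : Irrational (cfX x n - (⌊cfX x n⌋ : ℤ)) := Irrational.sub_intCast (cfX_irrational hx n) _
  have h2 : cfX x n - ⌊cfX x n⌋ ≠ 0 := by
    intro h; exact h1.ne_rat 0 (by push_cast; exact h)
  have h3 := Int.fract_nonneg (cfX x n)
  have h4 := Int.fract_lt_one (cfX x n)
  rw [Int.fract] at h3 h4
  exact ⟨lt_of_le_of_ne h3 (Ne.symm h2), h4⟩

lemma cfA_one_le {x : ℝ} (hx : Irrational x) (n : ℕ) : 1 ≤ cfA x (n+1) := by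
  have := cfX_one_lt hx n
  have : (1:ℤ) ≤ ⌊cfX x (n+1)⌋ := by
    rw [Int.le_floor]; exact_mod_cast this.le
  exact this

/-- key algebraic recurrence: x_{n+1} * (x_n - a_n) = 1 -/
lemma cfX_rec {x : ℝ} (hx : Irrational x) (n : ℕ) :
    cfX x (n+1) * (cfX x n - (cfA x n : ℝ)) = 1 := by
  rw [cfX_succ hx n, cfA]
  have h := (cfX_fract_pos hx n).1
  rw [one_div]
  exact inv_mul_cancel₀ h.ne'

/-- the quadratic coefficient triples -/
noncomputable def qrec (x : ℝ) (A B C : ℤ) : ℕ → ℤ × ℤ × ℤ :=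
  fun n => Nat.rec (A, B, C)
    (fun n q => (q.1 * cfA x n ^ 2 + q.2.1 * cfA x n + q.2.2,
      2 * q.1 * cfA x n + q.2.1, q.1)) n

lemma qrec_zero (x : ℝ) (A B C : ℤ) : qrec x A B C 0 = (A, B, C) := rfl

lemma qrec_succ (x : ℝ) (A B C : ℤ) (n : ℕ) :
    qrec x A B C (n+1) =
      ((qrec x A B C n).1 * cfA x n ^ 2 + (qrec x A B C n).2.1 * cfA x n
        + (qrec x A B C n).2.2,
        2 * (qrec x A B C n).1 * cfA x n + (qrec x A B C n).2.1,
        (qrec x A B C n).1) := rfl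

lemma qrec_disc (x : ℝ) (A B C : ℤ) (n : ℕ) :
    (qrec x A B C n).2.1 ^ 2 - 4 * (qrec x A B C n).1 * (qrec x A B C n).2.2
      = B ^ 2 - 4 * A * C := by
  induction n with
  | zero => simp [qrec_zero]
  | succ n ih =>
    rw [qrec_succ]
    linear_combination ih

lemma qrec_root {x : ℝ} (hx : Irrational x) {A B C : ℤ}
    (hroot : (A : ℝ) * x ^ 2 + (B : ℝ) * x + (C : ℝ) = 0) (n : ℕ) :
    ((qrec x A B C n).1 : ℝ) * (cfX x n) ^ 2
      + ((qrec x A B C n).2.1 : ℝ) * cfX x n + ((qrec x A B C n).2.2 : ℝ) = 0 := by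
  induction n with
  | zero => simpa [qrec_zero, cfX] using hroot
  | succ n ih =>
    rw [qrec_succ]
    set u := cfX x n
    set v := cfX x (n+1)
    set a := ((qrec x A B C n).1 : ℝ)
    set b := ((qrec x A B C n).2.1 : ℝ)
    set c := ((qrec x A B C n).2.2 : ℝ)
    set d := (cfA x n : ℝ)
    have hv : v * (u - d) = 1 := cfX_rec hx n
    push_cast
    show (a * d ^ 2 + b * d + c) * v ^ 2 + (2 * a * d + b) * v + a = 0
    linear_combination v^2 * ih - (a*(d*v+1+u*v) + b*v) * hv

lemma qrec_fst_ne {x : ℝ} (hx : Irrational x) {A B C : ℤ} (hA : A ≠ 0)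
    (hroot : (A : ℝ) * x ^ 2 + (B : ℝ) * x + (C : ℝ) = 0) (n : ℕ) :
    (qrec x A B C n).1 ≠ 0 := by
  induction n with
  | zero => simpa [qrec_zero] using hA
  | succ n ih =>
    rw [qrec_succ]
    intro h
    have hr := qrec_root hx hroot n
    set u := cfX x n with hu
    set a := (qrec x A B C n).1
    set b := (qrec x A B C n).2.1
    set c := (qrec x A B C n).2.2
    set d := cfA x n
    have hirr : Irrational u := cfX_irrational hx n
    have hcast : (a : ℝ) * (d:ℝ)^2 + (b:ℝ) * (d:ℝ) + (c:ℝ) = 0 := by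
      exact_mod_cast congrArg (fun z : ℤ => (z : ℝ)) h
    have hud : u - (d:ℝ) ≠ 0 := sub_ne_zero.mpr (hirr.ne_int d)
    have hfac : (u - (d:ℝ)) * ((a:ℝ)*(u+(d:ℝ)) + (b:ℝ)) = 0 := by
      linear_combination hr - hcast
    have h2 : (a:ℝ)*(u+(d:ℝ)) + (b:ℝ) = 0 := (mul_eq_zero.mp hfac).resolve_left hud
    have ha : (a:ℝ) ≠ 0 := Int.cast_ne_zero.mpr ih
    have : u = (((-a*d - b : ℤ) : ℚ) / ((a : ℤ) : ℚ) : ℚ) := by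
      push_cast
      field_simp
      linarith [h2]
    exact hirr ⟨_, this.symm⟩

/-- conjugate sequence -/
noncomputable def yc (x : ℝ) (A B C : ℤ) (n : ℕ) : ℝ :=
  -((qrec x A B C n).2.1 : ℝ) / ((qrec x A B C n).1 : ℝ) - cfX x n

section conj

variable {x : ℝ} {A B C : ℤ}

lemma yc_sum (hx : Irrational x) (hA : A ≠ 0)
    (hroot : (A : ℝ) * x ^ 2 + (B : ℝ) * x + (C : ℝ) = 0) (n : ℕ) :
    ((qrec x A B C n).2.1 : ℝ) =
      -((qrec x A B C n).1 : ℝ) * (cfX x n + yc x A B C n) := by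
  have ha : ((qrec x A B C n).1 : ℝ) ≠ 0 :=
    Int.cast_ne_zero.mpr (qrec_fst_ne hx hA hroot n)
  rw [yc]
  field_simp
  ring

lemma yc_root (hx : Irrational x) (hA : A ≠ 0)
    (hroot : (A : ℝ) * x ^ 2 + (B : ℝ) * x + (C : ℝ) = 0) (n : ℕ) :
    ((qrec x A B C n).1 : ℝ) * (yc x A B C n) ^ 2
      + ((qrec x A B C n).2.1 : ℝ) * yc x A B C n + ((qrec x A B C n).2.2 : ℝ) = 0 := by
  have hb := yc_sum hx hA hroot n
  have hr := qrec_root hx hroot n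
  linear_combination hr + (yc x A B C n - cfX x n) * hb

lemma yc_prod (hx : Irrational x) (hA : A ≠ 0)
    (hroot : (A : ℝ) * x ^ 2 + (B : ℝ) * x + (C : ℝ) = 0) (n : ℕ) :
    ((qrec x A B C n).2.2 : ℝ) =
      ((qrec x A B C n).1 : ℝ) * cfX x n * yc x A B C n := by
  have hb := yc_sum hx hA hroot n
  have hr := qrec_root hx hroot n
  linear_combination hr - cfX x n * hb

lemma yc_irrational (hx : Irrational x) (hA : A ≠ 0)
    (hroot : (A : ℝ) * x ^ 2 + (B : ℝ) * x + (C : ℝ) = 0) (n : ℕ) :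
    Irrational (yc x A B C n) := by
  rw [yc]
  have : -((qrec x A B C n).2.1 : ℝ) / ((qrec x A B C n).1 : ℝ)
      = ((-(qrec x A B C n).2.1 / ((qrec x A B C n).1 : ℚ) : ℚ) : ℝ) := by
    push_cast; ring
  rw [this]
  exact (Irrational.ratCast_sub (cfX_irrational hx n) (q := _))

lemma yc_ne (hx : Irrational x) (hA : A ≠ 0)
    (hroot : (A : ℝ) * x ^ 2 + (B : ℝ) * x + (C : ℝ) = 0) (n : ℕ) :
    yc x A B C n ≠ cfX x n := by
  intro h
  have ha : ((qrec x A B C n).1 : ℝ) ≠ 0 :=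
    Int.cast_ne_zero.mpr (qrec_fst_ne hx hA hroot n)
  have hirr := cfX_irrational hx n
  rw [yc] at h
  have : cfX x n = ((-(qrec x A B C n).2.1 / (2 * ((qrec x A B C n).1 : ℚ)) : ℚ) : ℝ) := by
    push_cast
    field_simp
    field_simp at h
    linarith [h]
  exact hirr ⟨_, this.symm⟩

lemma yc_disc (hx : Irrational x) (hA : A ≠ 0)
    (hroot : (A : ℝ) * x ^ 2 + (B : ℝ) * x + (C : ℝ) = 0) (n : ℕ) :
    ((B : ℝ) ^ 2 - 4 * A * C) =
      ((qrec x A B C n).1 : ℝ) ^ 2 * (cfX x n - yc x A B C n) ^ 2 := by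
  have hb := yc_sum hx hA hroot n
  have hc := yc_prod hx hA hroot n
  have hd : ((qrec x A B C n).2.1 : ℝ) ^ 2
      - 4 * ((qrec x A B C n).1 : ℝ) * ((qrec x A B C n).2.2 : ℝ)
      = (B : ℝ) ^ 2 - 4 * A * C := by
    exact_mod_cast congrArg (fun z : ℤ => (z : ℝ)) (qrec_disc x A B C n)
  linear_combination -hd + (((qrec x A B C n).2.1 : ℝ)
    - ((qrec x A B C n).1 : ℝ) * (cfX x n + yc x A B C n)) * hb
    - 4 * ((qrec x A B C n).1 : ℝ) * hc

end conj

lemma two_roots {a b c r s t : ℝ} (ha : a ≠ 0)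
    (hr : a * r ^ 2 + b * r + c = 0) (hs : a * s ^ 2 + b * s + c = 0)
    (ht : a * t ^ 2 + b * t + c = 0) (hrs : r ≠ s) : t = r ∨ t = s := by
  rcases eq_or_ne t r with h | h
  · exact Or.inl h
  · right
    have h1 : (t - r) * (a * (t + r) + b) = 0 := by linear_combination ht - hr
    have h2 : (r - s) * (a * (r + s) + b) = 0 := by linear_combination hr - hs
    have h1' : a * (t + r) + b = 0 :=
      (mul_eq_zero.mp h1).resolve_left (sub_ne_zero.mpr h)
    have h2' : a * (r + s) + b = 0 :=
      (mul_eq_zero.mp h2).resolve_left (sub_ne_zero.mpr hrs)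
    have : a * (t - s) = 0 := by linear_combination h1' - h2'
    have := (mul_eq_zero.mp this).resolve_left ha
    linarith [this]

section conj2

variable {x : ℝ} {A B C : ℤ}

lemma root_transfer {t : ℝ} (n : ℕ)
    (ht : ((qrec x A B C n).1 : ℝ) * t ^ 2 + ((qrec x A B C n).2.1 : ℝ) * t
      + ((qrec x A B C n).2.2 : ℝ) = 0)
    (htd : t ≠ (cfA x n : ℝ)) :
    ((qrec x A B C (n+1)).1 : ℝ) * (1 / (t - cfA x n)) ^ 2
      + ((qrec x A B C (n+1)).2.1 : ℝ) * (1 / (t - cfA x n))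
      + ((qrec x A B C (n+1)).2.2 : ℝ) = 0 := by
  have hd : t - (cfA x n : ℝ) ≠ 0 := sub_ne_zero.mpr htd
  rw [qrec_succ]
  push_cast
  field_simp
  linear_combination ht

lemma yc_rec (hx : Irrational x) (hA : A ≠ 0)
    (hroot : (A : ℝ) * x ^ 2 + (B : ℝ) * x + (C : ℝ) = 0) (n : ℕ) :
    yc x A B C (n+1) = 1 / (yc x A B C n - (cfA x n : ℝ)) := by
  have hirr := yc_irrational hx hA hroot n
  have hyd : yc x A B C n ≠ (cfA x n : ℝ) := hirr.ne_int _
  have ht := root_transfer n (yc_root hx hA hroot n) hyd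
  have hr := qrec_root hx hroot (n+1)
  have hs := yc_root hx hA hroot (n+1)
  have ha : ((qrec x A B C (n+1)).1 : ℝ) ≠ 0 :=
    Int.cast_ne_zero.mpr (qrec_fst_ne hx hA hroot (n+1))
  have hrs : cfX x (n+1) ≠ yc x A B C (n+1) := (yc_ne hx hA hroot (n+1)).symm
  rcases two_roots ha hr hs ht hrs with h | h
  · exfalso
    have hx1 : cfX x (n+1) = 1 / (cfX x n - (cfA x n : ℝ)) := cfX_succ hx n
    rw [hx1] at h
    have hxd : cfX x n - (cfA x n : ℝ) ≠ 0 :=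
      sub_ne_zero.mpr ((cfX_irrational hx n).ne_int _)
    have h2 : (yc x A B C n - (cfA x n : ℝ))⁻¹ = (cfX x n - (cfA x n : ℝ))⁻¹ := by
      rw [one_div, one_div] at h; exact h
    have h3 := inv_injective h2
    exact yc_ne hx hA hroot n (by linarith)
  · exact h.symm

end conj2

section reduced

variable {x : ℝ} {A B C : ℤ}

def Reduced (x : ℝ) (A B C : ℤ) (n : ℕ) : Prop :=
  1 < cfX x n ∧ -1 < yc x A B C n ∧ yc x A B C n < 0

lemma cfA_ge_one_of_lt {n : ℕ} (h : 1 < cfX x n) : 1 ≤ cfA x n := by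
  rw [cfA, Int.le_floor]; exact_mod_cast h.le

lemma reduced_step (hx : Irrational x) (hA : A ≠ 0)
    (hroot : (A : ℝ) * x ^ 2 + (B : ℝ) * x + (C : ℝ) = 0) {n : ℕ}
    (h : Reduced x A B C n) : Reduced x A B C (n+1) := by
  obtain ⟨h1, h2, h3⟩ := h
  have ha : (1 : ℝ) ≤ (cfA x n : ℝ) := by exact_mod_cast cfA_ge_one_of_lt h1
  have hu : yc x A B C n - (cfA x n : ℝ) < -1 := by linarith
  have hu0 : yc x A B C n - (cfA x n : ℝ) < 0 := by linarith
  have hrec := yc_rec hx hA hroot n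
  refine ⟨cfX_one_lt hx n, ?_, ?_⟩
  · rw [hrec]
    have h4 : (yc x A B C n - (cfA x n : ℝ)) * (1 / (yc x A B C n - (cfA x n : ℝ))) = 1 :=
      mul_one_div_cancel hu0.ne
    nlinarith [h4]
  · rw [hrec]
    exact div_neg_of_pos_of_neg one_pos hu0

/-- once negative (with n arbitrary, x_n > 1), next step is reduced -/
lemma reduced_of_neg (hx : Irrational x) (hA : A ≠ 0)
    (hroot : (A : ℝ) * x ^ 2 + (B : ℝ) * x + (C : ℝ) = 0) {n : ℕ}
    (h1 : 1 < cfX x n) (h3 : yc x A B C n < 0) : Reduced x A B C (n+1) := by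
  have ha : (1 : ℝ) ≤ (cfA x n : ℝ) := by exact_mod_cast cfA_ge_one_of_lt h1
  have hu : yc x A B C n - (cfA x n : ℝ) < -1 := by linarith
  have hu0 : yc x A B C n - (cfA x n : ℝ) < 0 := by linarith
  have hrec := yc_rec hx hA hroot n
  refine ⟨cfX_one_lt hx n, ?_, ?_⟩
  · rw [hrec]
    have h4 : (yc x A B C n - (cfA x n : ℝ)) * (1 / (yc x A B C n - (cfA x n : ℝ))) = 1 :=
      mul_one_div_cancel hu0.ne
    nlinarith [h4]
  · rw [hrec]
    exact div_neg_of_pos_of_neg one_pos hu0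

end reduced

section analysis

variable {x : ℝ} {A B C : ℤ}

lemma cfX_sub_yc_succ (hx : Irrational x) (hA : A ≠ 0)
    (hroot : (A : ℝ) * x ^ 2 + (B : ℝ) * x + (C : ℝ) = 0) (n : ℕ) :
    cfX x (n+1) - yc x A B C (n+1)
      = (yc x A B C n - cfX x n) * (cfX x (n+1) * yc x A B C (n+1)) := by
  have hx1 : cfX x (n+1) * (cfX x n - (cfA x n : ℝ)) = 1 := cfX_rec hx n
  have hyd : yc x A B C n - (cfA x n : ℝ) ≠ 0 :=
    sub_ne_zero.mpr ((yc_irrational hx hA hroot n).ne_int _)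
  have hy1 : yc x A B C (n+1) * (yc x A B C n - (cfA x n : ℝ)) = 1 := by
    rw [yc_rec hx hA hroot n, one_div]
    exact inv_mul_cancel₀ hyd
  linear_combination yc x A B C (n+1) * hx1 - cfX x (n+1) * hy1

lemma yc_exists_neg (hx : Irrational x) (hA : A ≠ 0)
    (hroot : (A : ℝ) * x ^ 2 + (B : ℝ) * x + (C : ℝ) = 0) :
    ∃ n, 1 ≤ n ∧ yc x A B C n < 0 := by
  by_contra hcon
  push_neg at hcon
  have hpos : ∀ n, 1 ≤ n → 0 < yc x A B C n := by
    intro n hn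
    refine lt_of_le_of_ne (hcon n hn) ?_
    intro h
    exact (yc_irrational hx hA hroot n).ne_int 0 (by exact_mod_cast h.symm)
  have hgt1 : ∀ n, 1 ≤ n → 1 < yc x A B C n := by
    intro n hn
    rcases lt_trichotomy (yc x A B C n) 1 with hlt | heq | hgt
    · exfalso
      obtain ⟨m, rfl⟩ : ∃ m, n = m + 1 := ⟨n - 1, by omega⟩
      have h1 : 1 < cfX x (m+1) := cfX_one_lt hx m
      have ha : (1 : ℝ) ≤ (cfA x (m+1) : ℝ) := by exact_mod_cast cfA_ge_one_of_lt h1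
      have hu0 : yc x A B C (m+1) - (cfA x (m+1) : ℝ) < 0 := by linarith
      have : yc x A B C (m+2) < 0 := by
        rw [yc_rec hx hA hroot (m+1)]
        exact div_neg_of_pos_of_neg one_pos hu0
      exact absurd this (not_lt.mpr (hcon (m+2) (by omega)))
    · exact absurd heq ((yc_irrational hx hA hroot n).ne_int 1 ∘ by
        intro h; exact_mod_cast h)
    · exact hgt
  -- for n ≥ 1 : 0 < yc n - a n < 1
  have hfr : ∀ n, 1 ≤ n →
      0 < yc x A B C n - (cfA x n : ℝ) ∧ yc x A B C n - (cfA x n : ℝ) < 1 := by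
    intro n hn
    have h2 : 1 < yc x A B C (n+1) := hgt1 (n+1) (by omega)
    have hrec := yc_rec hx hA hroot n
    set u := yc x A B C n - (cfA x n : ℝ) with hu
    have hu1 : 0 < u := by
      by_contra h
      push_neg at h
      have : 1 / u ≤ 0 := one_div_nonpos.mpr h
      rw [hrec] at h2; linarith
    have hu2 : u < 1 := by
      have h4 : u * (1 / u) = 1 := mul_one_div_cancel hu1.ne'
      rw [hrec] at h2
      nlinarith [h4]
    exact ⟨hu1, hu2⟩
  set d : ℕ → ℝ := fun n => |cfX x n - yc x A B C n| with hd
  have hdpos : ∀ n, 0 < d n := by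
    intro n
    exact abs_pos.mpr (sub_ne_zero.mpr (Ne.symm (yc_ne hx hA hroot n)))
  have hdlt : ∀ n, 1 ≤ n → d n < 1 := by
    intro n hn
    have h1 := cfX_fract_pos hx n
    have h2 := hfr n hn
    rw [hd]
    rw [cfA] at h2
    rw [abs_lt]
    exact ⟨by linarith [h1.1, h1.2, h2.1, h2.2], by linarith [h1.1, h1.2, h2.1, h2.2]⟩
  have hstep : ∀ n, 1 ≤ n → d (n+1) = d n * (cfX x (n+1) * yc x A B C (n+1)) := by
    intro n hn
    have h1 : 1 < cfX x (n+1) := cfX_one_lt hx n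
    have h2 : 1 < yc x A B C (n+1) := hgt1 (n+1) (by omega)
    have hpr : 0 < cfX x (n+1) * yc x A B C (n+1) := by nlinarith
    have := cfX_sub_yc_succ hx hA hroot n
    rw [hd]
    simp only
    rw [this, abs_mul, abs_sub_comm, abs_of_pos hpr]
  have hgrow : ∀ n, 1 ≤ n → 2 * d n < d (n+2) := by
    intro n hn
    have e1 := hstep n hn
    have e2 := hstep (n+1) (by omega)
    have hf := cfX_fract_pos hx (n+1)
    have hx2 : cfX x (n+2) * (cfX x (n+1) - (cfA x (n+1) : ℝ)) = 1 := cfX_rec hx (n+1)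
    have ha : (1:ℝ) ≤ (cfA x (n+1) : ℝ) := by
      exact_mod_cast cfA_ge_one_of_lt (cfX_one_lt hx n)
    rw [cfA] at hx2 ha
    have hx1p : 1 < cfX x (n+1) := cfX_one_lt hx n
    have hx2p : 1 < cfX x (n+2) := cfX_one_lt hx (n+1)
    have hy1 : 1 < yc x A B C (n+1) := hgt1 (n+1) (by omega)
    have hy2 : 1 < yc x A B C (n+2) := hgt1 (n+2) (by omega)
    have hdn : 0 < d n := hdpos n
    have h2f : 2 * (cfX x (n+1) - (⌊cfX x (n+1)⌋ : ℝ)) < cfX x (n+1) := by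
      linarith [hf.1, hf.2]
    have hprod : 2 < cfX x (n+1) * cfX x (n+2) := by
      nlinarith [hx2, h2f, hf.1]
    have key : d (n+2) = d n * (cfX x (n+1) * yc x A B C (n+1))
        * (cfX x (n+2) * yc x A B C (n+2)) := by rw [← e1, ← e2]
    rw [key]
    nlinarith [mul_pos hdn (by nlinarith : (0:ℝ) < cfX x (n+1) * cfX x (n+2)),
      mul_pos (mul_pos hdn (by nlinarith : (0:ℝ) < cfX x (n+1) * yc x A B C (n+1)))
        (by nlinarith : (0:ℝ) < cfX x (n+2)), hdn]
  have hiter : ∀ k : ℕ, 2 ^ k * d 1 ≤ d (1 + 2 * k) := by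
    intro k
    induction k with
    | zero => simp
    | succ k ih =>
      have h1 : 1 + 2 * (k + 1) = (1 + 2 * k) + 2 := by ring
      rw [h1]
      have h2 := hgrow (1 + 2 * k) (by omega)
      have : (2:ℝ) ^ (k+1) * d 1 = 2 * (2 ^ k * d 1) := by ring
      rw [this]
      linarith
  obtain ⟨k, hk⟩ := pow_unbounded_of_one_lt (1 / d 1) (one_lt_two (α := ℝ))
  have hd1 : 0 < d 1 := hdpos 1
  have h1 := hiter k
  have h2 := hdlt (1 + 2 * k) (by omega)
  have h3 : 1 < 2 ^ k * d 1 := by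
    rw [div_lt_iff₀ hd1] at hk
    nlinarith
  linarith

end analysis

section bounds

variable {x : ℝ} {A B C : ℤ}

lemma int_abs_le_sq (z : ℤ) : |z| ≤ z ^ 2 := by
  rcases eq_or_ne z 0 with h | h
  · simp [h]
  · have h1 : 1 ≤ |z| := Int.one_le_abs h
    calc |z| = |z| * 1 := (mul_one _).symm
    _ ≤ |z| * |z| := by exact mul_le_mul_of_nonneg_left h1 (abs_nonneg z)
    _ = z ^ 2 := by rw [← sq_abs]; ring

lemma disc_pos (hx : Irrational x) (hA : A ≠ 0)
    (hroot : (A : ℝ) * x ^ 2 + (B : ℝ) * x + (C : ℝ) = 0) :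
    0 < B ^ 2 - 4 * A * C := by
  have h0 := yc_disc hx hA hroot 0
  have hne : cfX x 0 - yc x A B C 0 ≠ 0 :=
    sub_ne_zero.mpr (Ne.symm (yc_ne hx hA hroot 0))
  have ha0 : ((qrec x A B C 0).1 : ℝ) ≠ 0 :=
    Int.cast_ne_zero.mpr (qrec_fst_ne hx hA hroot 0)
  have : (0:ℝ) < (B:ℝ) ^ 2 - 4 * A * C := by
    rw [h0]; positivity
  exact_mod_cast this

lemma reduced_bounds (hx : Irrational x) (hA : A ≠ 0)
    (hroot : (A : ℝ) * x ^ 2 + (B : ℝ) * x + (C : ℝ) = 0) {n : ℕ}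
    (h : Reduced x A B C n) :
    (qrec x A B C n).1 ^ 2 ≤ 5 * (B ^ 2 - 4 * A * C) ∧
    (qrec x A B C n).2.1 ^ 2 ≤ 5 * (B ^ 2 - 4 * A * C) ∧
    (qrec x A B C n).2.2 ^ 2 ≤ 5 * (B ^ 2 - 4 * A * C) := by
  obtain ⟨h1, h2, h3⟩ := h
  have hdint := qrec_disc x A B C n
  set a := ((qrec x A B C n).1 : ℝ) with haeq
  set b := ((qrec x A B C n).2.1 : ℝ) with hbeq
  set c := ((qrec x A B C n).2.2 : ℝ) with hceq
  set u := cfX x n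
  set v := yc x A B C n
  have hdisc : (B:ℝ)^2 - 4*A*C = a^2 * (u - v)^2 := yc_disc hx hA hroot n
  have hprod : c = a * u * v := yc_prod hx hA hroot n
  have ha0 : a ≠ 0 := Int.cast_ne_zero.mpr (qrec_fst_ne hx hA hroot n)
  have ha2 : 0 < a^2 := by positivity
  have hxy : 1 < u - v := by linarith
  have hd2 : b^2 - 4*a*c = ((B^2 - 4*A*C : ℤ) : ℝ) := by
    rw [haeq, hbeq, hceq]
    push_cast
    have h := congrArg (fun z : ℤ => (z : ℝ)) hdint
    simp only [Int.cast_sub, Int.cast_mul, Int.cast_pow, Int.cast_ofNat] at h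
    exact h
  have hD : (B:ℝ)^2 - 4*A*C = ((B^2 - 4*A*C : ℤ) : ℝ) := by push_cast; ring
  have hAr : a^2 < ((B^2 - 4*A*C : ℤ) : ℝ) := by
    rw [← hD, hdisc]
    have h6 : 1 < (u-v)^2 := by nlinarith
    nlinarith [mul_lt_mul_of_pos_left h6 ha2]
  have hCr : c^2 < ((B^2 - 4*A*C : ℤ) : ℝ) := by
    rw [← hD, hdisc, hprod]
    have hu : 0 < u := by linarith
    have h4 : u < u - v := by linarith
    have hv2 : v^2 < 1 := by nlinarith
    have hu2 : u^2 < (u-v)^2 := by nlinarith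
    nlinarith [hv2, hu2, ha2, mul_pos ha2 (mul_pos hu hu)]
  have hBr : b^2 ≤ 5 * ((B^2 - 4*A*C : ℤ) : ℝ) := by
    nlinarith [sq_nonneg (a - c), sq_nonneg (a + c), hAr, hCr, hd2]
  have hDpos := disc_pos hx hA hroot
  rw [haeq] at hAr
  rw [hbeq] at hBr
  rw [hceq] at hCr
  refine ⟨?_, ?_, ?_⟩
  · have h5 : (qrec x A B C n).1 ^ 2 < B^2 - 4*A*C := by exact_mod_cast hAr
    omega
  · exact_mod_cast hBr
  · have h5 : (qrec x A B C n).2.2 ^ 2 < B^2 - 4*A*C := by exact_mod_cast hCr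
    omega

lemma eventually_reduced (hx : Irrational x) (hA : A ≠ 0)
    (hroot : (A : ℝ) * x ^ 2 + (B : ℝ) * x + (C : ℝ) = 0) :
    ∃ N, ∀ n, N ≤ n → Reduced x A B C n := by
  obtain ⟨n₀, hn₀1, hneg⟩ := yc_exists_neg hx hA hroot
  obtain ⟨m, rfl⟩ : ∃ m, n₀ = m + 1 := ⟨n₀ - 1, by omega⟩
  have hbase : Reduced x A B C (m + 2) :=
    reduced_of_neg hx hA hroot (cfX_one_lt hx m) hneg
  refine ⟨m + 2, ?_⟩
  intro n hn
  obtain ⟨t, rfl⟩ : ∃ t, n = m + 2 + t := ⟨n - (m+2), by omega⟩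
  clear hn
  induction t with
  | zero => exact hbase
  | succ t ih => exact reduced_step hx hA hroot ih

end bounds

lemma cfX_congr {x : ℝ} {m n : ℕ} (h : cfX x m = cfX x n) :
    cfX x (m+1) = cfX x (n+1) := by
  simp only [cfX]
  rw [h]

/-- Lagrange: a quadratic irrational has eventually periodic continued fraction. -/
theorem quadratic_irrational_cf_eventually_periodic (x : ℝ) (hx : Irrational x)
    (A B C : ℤ) (hA : A ≠ 0) (hroot : (A : ℝ) * x ^ 2 + (B : ℝ) * x + (C : ℝ) = 0) :
    ∃ k p : ℕ, 1 ≤ p ∧ ∀ n : ℕ, k ≤ n → cfA x (n + p) = cfA x n := by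

  classical
  obtain ⟨N, hred⟩ := eventually_reduced hx hA hroot
  set K := 5 * (B ^ 2 - 4 * A * C) with hK
  set T : Finset (ℤ × ℤ × ℤ) :=
    Finset.Icc (-K) K ×ˢ Finset.Icc (-K) K ×ˢ Finset.Icc (-K) K with hT
  have hmaps : ∀ i ∈ Finset.range (T.card * 2 + 1),
      (fun i => qrec x A B C (N + i)) i ∈ T := by
    intro i _
    obtain ⟨hb1, hb2, hb3⟩ := reduced_bounds hx hA hroot (hred (N + i) (by omega))
    have h1 := abs_le.mp (le_trans (int_abs_le_sq _) hb1)
    have h2 := abs_le.mp (le_trans (int_abs_le_sq _) hb2)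
    have h3 := abs_le.mp (le_trans (int_abs_le_sq _) hb3)
    simp only [hT, Finset.mem_product, Finset.mem_Icc]
    exact ⟨⟨h1.1, h1.2⟩, ⟨h2.1, h2.2⟩, h3.1, h3.2⟩
  obtain ⟨q, hqT, hcard⟩ :=
    Finset.exists_lt_card_fiber_of_mul_lt_card_of_maps_to (n := 2) hmaps
      (by rw [Finset.card_range]; omega)
  rw [Finset.two_lt_card_iff] at hcard
  obtain ⟨i, j, k, hi, hj, hk, hij, hik, hjk⟩ := hcard
  simp only [Finset.mem_filter, Finset.mem_range] at hi hj hk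
  have hroots : ∀ m, qrec x A B C (N + m) = q →
      (q.1 : ℝ) * (cfX x (N + m)) ^ 2 + (q.2.1 : ℝ) * (cfX x (N + m))
        + (q.2.2 : ℝ) = 0 := by
    intro m hm
    have := qrec_root hx hroot (N + m)
    rw [hm] at this
    exact this
  have hq1 : (q.1 : ℝ) ≠ 0 := by
    have h := qrec_fst_ne hx hA hroot (N + i)
    rw [hi.2] at h
    exact Int.cast_ne_zero.mpr h
  have hpair : ∃ u v : ℕ, u < v ∧ cfX x (N + u) = cfX x (N + v) := by
    by_cases hijx : cfX x (N + i) = cfX x (N + j)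
    · rcases lt_or_gt_of_ne hij with h | h
      · exact ⟨i, j, h, hijx⟩
      · exact ⟨j, i, h, hijx.symm⟩
    · rcases two_roots hq1 (hroots i hi.2) (hroots j hj.2) (hroots k hk.2) hijx
        with h | h
      · rcases lt_or_gt_of_ne hik with h' | h'
        · exact ⟨i, k, h', h.symm⟩
        · exact ⟨k, i, h', h⟩
      · rcases lt_or_gt_of_ne hjk with h' | h'
        · exact ⟨j, k, h', h.symm⟩
        · exact ⟨k, j, h', h⟩
  obtain ⟨u, v, huv, hxy⟩ := hpair
  refine ⟨N + u, v - u, by omega, ?_⟩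
  have hper : ∀ t, cfX x (N + u + t + (v - u)) = cfX x (N + u + t) := by
    intro t
    induction t with
    | zero =>
      have h0 : N + u + 0 + (v - u) = N + v := by omega
      have h1 : N + u + 0 = N + u := by omega
      rw [h0, h1]
      exact hxy.symm
    | succ t ih =>
      have e1 : N + u + (t + 1) + (v - u) = (N + u + t + (v - u)) + 1 := by omega
      have e2 : N + u + (t + 1) = (N + u + t) + 1 := by omega
      rw [e1, e2]
      exact cfX_congr ih
  intro n hn
  obtain ⟨t, rfl⟩ : ∃ t, n = N + u + t := ⟨n - (N + u), by omega⟩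
  rw [cfA, cfA]
  exact congrArg Int.floor (hper t)
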